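/- Let {(Xᵢ,dᵢ,≤ᵢ) : 1 ≤ i ≤ q} be quasi-ordered metric spaces with each dᵢ (≤ᵢ)-complete, and let X = ∏ᵢ Xᵢ with Δ(x,y) = (d₁(x₁,y₁),...,d_q(x_q,y_q)) and x ⪯ y iff xᵢ ≤ᵢ yᵢ for all i. Let Tᵢ : X → Xᵢ (1 ≤ i ≤ q) be maps such that: there exists a = (a₁,...,a_q) ∈ X with aᵢ ≤ᵢ Tᵢa for all i; each Tᵢ is increasing (x ⪯ y implies Tᵢx ≤ᵢ Tᵢy); and there is a normal q×q matrix A = (a_{ij}) with nonnegative entries such that dᵢ(Tᵢx,Tᵢy) ≤ ∑ⱼ a_{ij}·dⱼ(xⱼ,yⱼ) for all x ⪯ y and all i. If either every Tᵢ is (Δ,⪯)-continuous, or every (≤ᵢ) is dᵢ-self-closed, then the associated self-map T : X → X, Tx = (T₁x,...,T_qx), is a Picard operator modulo (Δ,⪯): for every x ∈ X with x ⪯ Tx, the orbit (Tⁿx)ₙ converges coordinatewise and its limit is a fixed point of T. -/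

import Mathlib

open Filter Topology Matrix

/-- Product fixed point theorem: for a system of quasi-ordered metric spaces with
each `dᵢ` `(≤ᵢ)`-complete and maps `Tᵢ` increasing, admitting a start point and
satisfying a linear contraction condition governed by a normal nonnegative matrix,
under the continuity or self-closedness alternative the associated product map
`F x = (T₁ x, …, T_q x)` is a Picard operator. -/
theorem stmt12 {q : ℕ} (X : Fin q → Type*) [∀ i, MetricSpace (X i)]
    (le : ∀ i, X i → X i → Prop)
    (hrefl : ∀ i x, le i x x)
    (htrans : ∀ i x y z, le i x y → le i y z → le i x z)
    (hcomplete : ∀ i, ∀ u : ℕ → X i, (∀ n m : ℕ, n ≤ m → le i (u n) (u m)) →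
      CauchySeq u → ∃ x, Tendsto u atTop (𝓝 x))
    (T : ∀ i, (∀ j, X j) → X i)
    (F : (∀ j, X j) → (∀ j, X j)) (hF : ∀ x i, F x i = T i x)
    (ha : ∃ a : ∀ j, X j, ∀ i, le i (a i) (T i a))
    (hmono : ∀ i, ∀ x y : ∀ j, X j, (∀ j, le j (x j) (y j)) → le i (T i x) (T i y))
    (A : Matrix (Fin q) (Fin q) ℝ) (hA : ∀ i j, 0 ≤ A i j)
    (hnormal : ∃ z : Fin q → ℝ, (∀ i, 0 < z i) ∧ ∀ i, A.mulVec z i < z i)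
    (hcontr : ∀ x y : ∀ j, X j, (∀ j, le j (x j) (y j)) →
      ∀ i, dist (T i x) (T i y) ≤ ∑ j, A i j * dist (x j) (y j))
    (hcc : (∀ i, ∀ (u : ℕ → ∀ j, X j) (x : ∀ j, X j),
        (∀ n m : ℕ, n ≤ m → ∀ j, le j (u n j) (u m j)) →
        (∀ j, Tendsto (fun n => u n j) atTop (𝓝 (x j))) →
        Tendsto (fun n => T i (u n)) atTop (𝓝 (T i x))) ∨
      (∀ i, ∀ (u : ℕ → X i) (x : X i), (∀ n m : ℕ, n ≤ m → le i (u n) (u m)) →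
        Tendsto u atTop (𝓝 x) → ∀ n, le i (u n) x)) :
    ∀ x : ∀ j, X j, (∀ i, le i (x i) (T i x)) →
      ∃ z : ∀ j, X j, (∀ i, Tendsto (fun n => F^[n] x i) atTop (𝓝 (z i))) ∧
        ∀ i, T i z = z i := by
  intro x hx
  rcases Nat.eq_zero_or_pos q with hq | hq
  · refine ⟨x, fun i => absurd i.2 (by omega), fun i => absurd i.2 (by omega)⟩
  haveI : Nonempty (Fin q) := ⟨⟨0, hq⟩⟩
  obtain ⟨z, hz, hAz⟩ := hnormal
  -- basic facts about iterates
  have hu : ∀ n i, F^[n+1] x i = T i (F^[n] x) := fun n i => by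
    rw [Function.iterate_succ_apply', hF]
  have hstep : ∀ n j, le j (F^[n] x j) (F^[n+1] x j) := by
    intro n
    induction n with
    | zero => intro j; rw [hu 0 j]; exact hx j
    | succ n ih =>
      intro j
      rw [hu n j, hu (n+1) j]
      exact hmono j _ _ ih
  have hasc : ∀ n m : ℕ, n ≤ m → ∀ j, le j (F^[n] x j) (F^[m] x j) := by
    intro n m hnm
    induction m, hnm using Nat.le_induction with
    | base => exact fun j => hrefl j _
    | succ m hm ih => exact fun j => htrans j _ _ _ (ih j) (hstep m j)
  -- the contraction ratio
  set r : ℝ := Finset.univ.sup' Finset.univ_nonempty (fun i => A.mulVec z i / z i) with hr_def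
  have hr1 : r < 1 := by
    rw [hr_def, Finset.sup'_lt_iff]
    intro i _
    exact (div_lt_one (hz i)).mpr (hAz i)
  have hmv0 : ∀ i, 0 ≤ A.mulVec z i := by
    intro i
    simp only [Matrix.mulVec, dotProduct]
    exact Finset.sum_nonneg fun j _ => mul_nonneg (hA i j) (hz j).le
  have hr0 : 0 ≤ r := by
    obtain ⟨i⟩ := (inferInstance : Nonempty (Fin q))
    exact le_trans (div_nonneg (hmv0 i) (hz i).le)
      (Finset.le_sup' (fun i => A.mulVec z i / z i) (Finset.mem_univ i))
  have hAzr : ∀ i, A.mulVec z i ≤ r * z i := by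
    intro i
    have h2 := mul_le_mul_of_nonneg_right
      (Finset.le_sup' (fun i => A.mulVec z i / z i) (Finset.mem_univ i)) (hz i).le
    rwa [div_mul_cancel₀ _ (hz i).ne'] at h2
  set C : ℝ := Finset.univ.sup' Finset.univ_nonempty
      (fun i => dist (x i) (F^[1] x i) / z i) with hC_def
  have hC0 : 0 ≤ C := by
    obtain ⟨i⟩ := (inferInstance : Nonempty (Fin q))
    exact le_trans (div_nonneg dist_nonneg (hz i).le)
      (Finset.le_sup' (fun i => dist (x i) (F^[1] x i) / z i) (Finset.mem_univ i))
  have hCd : ∀ i, dist (F^[0] x i) (F^[1] x i) ≤ C * z i := by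
    intro i
    have h2 := mul_le_mul_of_nonneg_right
      (Finset.le_sup' (fun i => dist (x i) (F^[1] x i) / z i) (Finset.mem_univ i)) (hz i).le
    rw [div_mul_cancel₀ _ (hz i).ne'] at h2
    exact h2
  have hd : ∀ n i, dist (F^[n] x i) (F^[n+1] x i) ≤ C * r ^ n * z i := by
    intro n
    induction n with
    | zero => intro i; simpa using hCd i
    | succ n ih =>
      intro i
      rw [hu n i, hu (n+1) i]
      calc dist (T i (F^[n] x)) (T i (F^[n+1] x))
          ≤ ∑ j, A i j * dist (F^[n] x j) (F^[n+1] x j) :=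
            hcontr _ _ (hstep n) i
        _ ≤ ∑ j, A i j * (C * r ^ n * z j) := by
            refine Finset.sum_le_sum fun j _ =>
              mul_le_mul_of_nonneg_left (ih j) (hA i j)
        _ = C * r ^ n * A.mulVec z i := by
            simp only [Matrix.mulVec, dotProduct, Finset.mul_sum]
            exact Finset.sum_congr rfl fun j _ => by ring
        _ ≤ C * r ^ n * (r * z i) := by
            exact mul_le_mul_of_nonneg_left (hAzr i)
              (mul_nonneg hC0 (pow_nonneg hr0 n))
        _ = C * r ^ (n+1) * z i := by ring
  -- each coordinate sequence is Cauchy and converges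
  have hcauchy : ∀ i, CauchySeq (fun n => F^[n] x i) := by
    intro i
    refine cauchySeq_of_le_geometric r (C * z i) hr1 fun n => ?_
    calc dist (F^[n] x i) (F^[n+1] x i) ≤ C * r ^ n * z i := hd n i
    _ = C * z i * r ^ n := by ring
  have hlim : ∀ i, ∃ w, Tendsto (fun n => F^[n] x i) atTop (𝓝 w) := fun i =>
    hcomplete i _ (fun n m h => hasc n m h i) (hcauchy i)
  choose w hw using hlim
  refine ⟨w, hw, ?_⟩
  have hshift : ∀ i, Tendsto (fun n => T i (F^[n] x)) atTop (𝓝 (w i)) := by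
    intro i
    have := (hw i).comp (tendsto_add_atTop_nat 1)
    simpa only [Function.comp_def, hu] using this
  rcases hcc with hcont | hsc
  · intro i
    exact tendsto_nhds_unique (hcont i _ w hasc hw) (hshift i)
  · intro i
    have hub : ∀ n j, le j (F^[n] x j) (w j) := fun n j =>
      hsc j (fun n => F^[n] x j) (w j) (fun n m h => hasc n m h j) (hw j) n
    have hdist0 : Tendsto (fun n => dist (T i (F^[n] x)) (T i w)) atTop (𝓝 0) := by
      have hg : Tendsto (fun n => ∑ j, A i j * dist (F^[n] x j) (w j)) atTop (𝓝 0) := by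
        have : Tendsto (fun n => ∑ j, A i j * dist (F^[n] x j) (w j)) atTop
            (𝓝 (∑ j : Fin q, A i j * 0)) := by
          refine tendsto_finset_sum _ fun j _ => ?_
          have hdj : Tendsto (fun n => dist (F^[n] x j) (w j)) atTop (𝓝 0) := by
            simpa using (hw j).dist (tendsto_const_nhds : Tendsto (fun _ : ℕ => w j) atTop _)
          exact tendsto_const_nhds.mul hdj
        simpa using this
      refine squeeze_zero (fun n => dist_nonneg) (fun n => ?_) hg
      exact hcontr _ _ (hub n) i
    have : Tendsto (fun n => T i (F^[n] x)) atTop (𝓝 (T i w)) :=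
      (tendsto_iff_dist_tendsto_zero).mpr hdist0
    exact tendsto_nhds_unique this (hshift i)
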